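/- Let G be a connected graph and H a graph. Then dim_f(G[H]) = m1(G)·l_f(H) + (m2(G)/2)·dim_f(K2[H]) + (m3(G)/2)·dim_f(K2[H̄]), where H̄ is the complement of H. -/

import Mathlib

open Finset

variable {α β V : Type*}

/-- The corona product `G ⊙ H`. -/
def SimpleGraph.corona (G : SimpleGraph α) (H : SimpleGraph β) :
    SimpleGraph (α ⊕ α × β) where
  Adj x y :=
    match x, y with
    | Sum.inl u1, Sum.inl u2 => G.Adj u1 u2
    | Sum.inl u1, Sum.inr p => u1 = p.1
    | Sum.inr p, Sum.inl u2 => p.1 = u2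
    | Sum.inr p, Sum.inr q => p.1 = q.1 ∧ H.Adj p.2 q.2
  symm := by
    constructor
    rintro (u1 | p) (u2 | q) h
    · exact h.symm
    · exact h.symm
    · exact h.symm
    · exact ⟨h.1.symm, h.2.symm⟩
  loopless := by
    constructor
    rintro (u | p) h
    · exact G.irrefl h
    · exact H.irrefl h.2

/-- The lexicographic product `G[H]`. -/
def SimpleGraph.lexProd (G : SimpleGraph α) (H : SimpleGraph β) :
    SimpleGraph (α × β) where
  Adj x y := G.Adj x.1 y.1 ∨ (x.1 = y.1 ∧ H.Adj x.2 y.2)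
  symm := by
    constructor
    rintro x y (h | ⟨h1, h2⟩)
    · exact Or.inl h.symm
    · exact Or.inr ⟨h1.symm, h2.symm⟩
  loopless := by
    constructor
    rintro x (h | ⟨h1, h2⟩)
    · exact G.irrefl h
    · exact H.irrefl h2

open scoped Classical in
/-- `R_F{x,y}`: the set of vertices resolving `x` and `y` (distance measured by `edist`,
which is `∞` between vertices in different components). -/
noncomputable def resolvingFinset (F : SimpleGraph V) [Fintype V] (x y : V) : Finset V :=
  univ.filter fun z => F.edist x z ≠ F.edist y z

/-- `S_H{v₁,v₂} = {v₁,v₂} ∪ (N_H(v₁) Δ N_H(v₂))`. -/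
def locatingFinset (H : SimpleGraph V) [Fintype V] [DecidableEq V]
    [DecidableRel H.Adj] (v1 v2 : V) : Finset V :=
  {v1, v2} ∪ symmDiff (H.neighborFinset v1) (H.neighborFinset v2)

/-- A resolving function of `F`. -/
def IsResolvingFn (F : SimpleGraph V) [Fintype V] (g : V → ℝ) : Prop :=
  (∀ v, g v ∈ Set.Icc (0 : ℝ) 1) ∧
    ∀ x y : V, x ≠ y → 1 ≤ ∑ z ∈ resolvingFinset F x y, g z

/-- The fractional metric dimension `dim_f(F)`. -/
noncomputable def fracMetricDim (F : SimpleGraph V) [Fintype V] : ℝ :=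
  sInf {w | ∃ g, IsResolvingFn F g ∧ w = ∑ v, g v}

/-- A locating function of `H`. -/
def IsLocatingFn (H : SimpleGraph V) [Fintype V] [DecidableEq V]
    [DecidableRel H.Adj] (g : V → ℝ) : Prop :=
  (∀ v, g v ∈ Set.Icc (0 : ℝ) 1) ∧
    ∀ v1 v2 : V, v1 ≠ v2 → 1 ≤ ∑ v ∈ locatingFinset H v1 v2, g v

/-- `l_f(H)`: the minimum weight of a locating function. -/
noncomputable def fracLoc (H : SimpleGraph V) [Fintype V] [DecidableEq V]
    [DecidableRel H.Adj] : ℝ :=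
  sInf {w | ∃ g, IsLocatingFn H g ∧ w = ∑ v, g v}

open scoped Classical in
/-- `λ(H)`: maximum number of common neighbours of two adjacent vertices, `-1` if no edges. -/
noncomputable def lambdaMax (H : SimpleGraph V) [Fintype V] : ℤ :=
  if hne : (univ.filter fun p : V × V => H.Adj p.1 p.2).Nonempty then
    (univ.filter fun p : V × V => H.Adj p.1 p.2).sup' hne fun p =>
      ((univ.filter fun w => H.Adj p.1 w ∧ H.Adj p.2 w).card : ℤ)
  else -1

open scoped Classical in
/-- `μ(H)`: maximum number of common neighbours of two distinct nonadjacent vertices,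
`0` for complete graphs. -/
noncomputable def muMax (H : SimpleGraph V) [Fintype V] : ℤ :=
  if hne : (univ.filter fun p : V × V => p.1 ≠ p.2 ∧ ¬H.Adj p.1 p.2).Nonempty then
    (univ.filter fun p : V × V => p.1 ≠ p.2 ∧ ¬H.Adj p.1 p.2).sup' hne fun p =>
      ((univ.filter fun w => H.Adj p.1 w ∧ H.Adj p.2 w).card : ℤ)
  else 0

/-- A graph is vertex-transitive if its automorphism group is transitive on vertices. -/
def IsVertexTransitive (H : SimpleGraph V) : Prop :=
  ∀ u v : V, ∃ φ : H ≃g H, φ u = v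

/-- Two distinct vertices are twins if they have the same closed or the same open
neighbourhood. -/
def SimpleGraph.Twins (G : SimpleGraph V) (u1 u2 : V) : Prop :=
  u1 ≠ u2 ∧ (insert u1 (G.neighborSet u1) = insert u2 (G.neighborSet u2) ∨
    G.neighborSet u1 = G.neighborSet u2)

open scoped Classical in
/-- `m₁(G)`: number of vertices in twin-equivalence classes of type 1 (singletons). -/
noncomputable def m1 (G : SimpleGraph V) [Fintype V] : ℕ :=
  (univ.filter fun u => ∀ w, ¬G.Twins u w).card

open scoped Classical in
/-- `m₂(G)`: number of vertices in twin-equivalence classes of type 2 (cliques). -/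
noncomputable def m2 (G : SimpleGraph V) [Fintype V] : ℕ :=
  (univ.filter fun u => ∃ w, G.Twins u w ∧ G.Adj u w).card

open scoped Classical in
/-- `m₃(G)`: number of vertices in twin-equivalence classes of type 3 (independent sets). -/
noncomputable def m3 (G : SimpleGraph V) [Fintype V] : ℕ :=
  (univ.filter fun u => ∃ w, G.Twins u w ∧ ¬G.Adj u w).card


section Aux
open SimpleGraph
open scoped Classical

variable {α β : Type*}

lemma exists_adj_of_connected (G : SimpleGraph α) [Fintype α] (hG : G.Connected)
    (hca : 2 ≤ Fintype.card α) (u : α) : ∃ s, G.Adj u s := by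
  obtain ⟨t, ht⟩ := Fintype.exists_ne_of_one_lt_card (by omega) u
  obtain ⟨p⟩ := hG u t
  cases p with
  | nil => exact absurd rfl ht
  | cons h q => exact ⟨_, h⟩

/-- projection bound: a walk in the lexicographic product projects to `G`. -/
lemma edist_fst_le_length (G : SimpleGraph α) (H : SimpleGraph β) :
    ∀ {x y : α × β} (p : (G.lexProd H).Walk x y), G.edist x.1 y.1 ≤ p.length := by
  intro x y p
  induction p with
  | nil => simp
  | @cons a b c h q ih =>
    have hlen : (((SimpleGraph.Walk.cons h q).length : ℕ) : ℕ∞) = (q.length : ℕ∞) + 1 := by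
      rw [SimpleGraph.Walk.length_cons]; push_cast; ring
    rcases h with h | ⟨h1, _⟩
    · rw [hlen]
      calc G.edist a.1 c.1 ≤ G.edist a.1 b.1 + G.edist b.1 c.1 := SimpleGraph.edist_triangle
        _ ≤ 1 + (q.length : ℕ∞) :=
            add_le_add
              (by simpa using SimpleGraph.edist_le (SimpleGraph.Walk.cons h SimpleGraph.Walk.nil))
              ih
        _ = (q.length : ℕ∞) + 1 := by ring
    · rw [hlen, h1]
      exact le_trans ih le_self_add

/-- the inclusion `u ↦ (u, w)` as a graph homomorphism into the product. -/
def colHom (G : SimpleGraph α) (H : SimpleGraph β) (w : β) : G →g G.lexProd H where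
  toFun u := (u, w)
  map_rel' h := Or.inl h

lemma lex_edist_ne (G : SimpleGraph α) (H : SimpleGraph β) (hG : G.Connected)
    {u1 u2 : α} (v1 v2 : β) (hne : u1 ≠ u2) :
    (G.lexProd H).edist (u1, v1) (u2, v2) = G.edist u1 u2 := by
  refine le_antisymm ?_ ?_
  · obtain ⟨p, hp⟩ := (hG u1 u2).exists_walk_length_eq_edist
    cases p with
    | nil => exact absurd rfl hne
    | @cons _ s _ h q =>
      refine le_trans
        (SimpleGraph.edist_le (SimpleGraph.Walk.cons (Or.inl h) (q.map (colHom G H v2)))) ?_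
      rw [← hp]
      exact_mod_cast (Nat.le_of_eq (congrArg (· + 1) (SimpleGraph.Walk.length_map (colHom G H v2) q)))
  · rw [SimpleGraph.edist_eq_sInf]
    refine le_sInf ?_
    rintro b ⟨p, rfl⟩
    exact edist_fst_le_length G H p


lemma two_le_enat {e : ℕ∞} (h0 : e ≠ 0) (h1 : e ≠ 1) : 2 ≤ e := by
  cases e with
  | top => exact le_top
  | coe n =>
    have hn0 : n ≠ 0 := by simpa using h0
    have hn1 : n ≠ 1 := by simpa using h1
    exact_mod_cast (by omega : 2 ≤ n)

lemma lexProd_adj {G : SimpleGraph α} {H : SimpleGraph β} {x y : α × β} :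
    (G.lexProd H).Adj x y ↔ G.Adj x.1 y.1 ∨ (x.1 = y.1 ∧ H.Adj x.2 y.2) := Iff.rfl

lemma lex_edist_same (G : SimpleGraph α) (H : SimpleGraph β) [Fintype α] (hG : G.Connected)
    (hca : 2 ≤ Fintype.card α) (u : α) {v1 v2 : β} (hne : v1 ≠ v2) :
    (G.lexProd H).edist (u, v1) (u, v2) = if H.Adj v1 v2 then 1 else 2 := by
  by_cases hadj : H.Adj v1 v2
  · rw [if_pos hadj, SimpleGraph.edist_eq_one_iff_adj]
    exact Or.inr ⟨rfl, hadj⟩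
  · rw [if_neg hadj]
    refine le_antisymm ?_ (two_le_enat ?_ ?_)
    · obtain ⟨s, hs⟩ := exists_adj_of_connected G hG hca u
      refine le_trans (SimpleGraph.edist_le
        (SimpleGraph.Walk.cons (Or.inl hs : (G.lexProd H).Adj (u, v1) (s, v1))
          (SimpleGraph.Walk.cons (Or.inl hs.symm) SimpleGraph.Walk.nil))) ?_
      simp [SimpleGraph.Walk.length_cons]
      exact le_rfl
    · simp [Prod.ext_iff, hne]
    · intro hh
      rcases SimpleGraph.edist_eq_one_iff_adj.mp hh with h | ⟨-, h⟩
      · exact G.irrefl h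
      · exact hadj h

lemma lex_edist_col (G : SimpleGraph α) (H : SimpleGraph β) [Fintype α] (hG : G.Connected)
    (hca : 2 ≤ Fintype.card α) (u : α) (v w : β) :
    (G.lexProd H).edist (u, v) (u, w) =
      if w = v then 0 else if H.Adj v w then 1 else 2 := by
  by_cases hw : w = v
  · simp [hw]
  · rw [if_neg hw, lex_edist_same G H hG hca u (Ne.symm hw)]

lemma twins_symm {G : SimpleGraph α} {u1 u2 : α} (h : G.Twins u1 u2) : G.Twins u2 u1 :=
  ⟨h.1.symm, h.2.imp Eq.symm Eq.symm⟩

lemma twins_adj_iff {G : SimpleGraph α} {u1 u2 : α} (hT : G.Twins u1 u2) {s : α}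
    (h1 : s ≠ u1) (h2 : s ≠ u2) : G.Adj u1 s ↔ G.Adj u2 s := by
  rcases hT.2 with h | h
  · have := Set.ext_iff.mp h s
    simp only [Set.mem_insert_iff, SimpleGraph.mem_neighborSet, h1, h2, false_or] at this
    exact this
  · have := Set.ext_iff.mp h s
    simp only [SimpleGraph.mem_neighborSet] at this
    exact this

lemma twins_edist_le {G : SimpleGraph α} (hG : G.Connected) {u1 u2 : α} (hT : G.Twins u1 u2)
    {t : α} (h1 : t ≠ u1) (h2 : t ≠ u2) : G.edist u1 t ≤ G.edist u2 t := by
  obtain ⟨p, hp⟩ := (hG u2 t).exists_walk_length_eq_edist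
  rw [← hp]
  cases p with
  | nil => exact absurd rfl h2
  | @cons _ s _ h q =>
    by_cases hs : s = u1
    · subst hs
      refine le_trans (SimpleGraph.edist_le q) ?_
      exact_mod_cast Nat.cast_le.mpr (by simp)
    · have hadj : G.Adj u1 s := by
        have hsne2 : s ≠ u2 := h.ne'
        exact (twins_adj_iff hT hs hsne2).mpr h
      refine le_trans (SimpleGraph.edist_le (SimpleGraph.Walk.cons hadj q)) ?_
      simp

lemma twins_edist {G : SimpleGraph α} (hG : G.Connected) {u1 u2 : α} (hT : G.Twins u1 u2)
    {t : α} (h1 : t ≠ u1) (h2 : t ≠ u2) : G.edist u1 t = G.edist u2 t :=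
  le_antisymm (twins_edist_le hG hT h1 h2) (twins_edist_le hG (twins_symm hT) h2 h1)

lemma adj_one_edist_ne {G : SimpleGraph α} {a b t : α} (h1 : G.Adj a t) (h2 : ¬G.Adj b t)
    (h3 : t ≠ b) : G.edist a t ≠ G.edist b t := by
  have e1 : G.edist a t = 1 := SimpleGraph.edist_eq_one_iff_adj.mpr h1
  rw [e1]
  intro hh
  exact h2 (SimpleGraph.edist_eq_one_iff_adj.mp hh.symm)

lemma not_twins_exists {G : SimpleGraph α} {u1 u2 : α} (hne : u1 ≠ u2)
    (hnt : ¬G.Twins u1 u2) :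
    ∃ t, t ≠ u1 ∧ t ≠ u2 ∧ G.edist u1 t ≠ G.edist u2 t := by
  rw [SimpleGraph.Twins, not_and_or] at hnt
  rcases hnt with h | h
  · exact absurd hne h
  rw [not_or] at h
  obtain ⟨hc, ho⟩ := h
  by_cases hadj : G.Adj u1 u2
  · obtain ⟨s, hs⟩ := not_forall.mp (fun hh => hc (Set.ext hh))
    have hmem : (s ∈ insert u1 (G.neighborSet u1) ∧ s ∉ insert u2 (G.neighborSet u2)) ∨
        (s ∉ insert u1 (G.neighborSet u1) ∧ s ∈ insert u2 (G.neighborSet u2)) := by tauto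
    rcases hmem with ⟨ha, hb⟩ | ⟨ha, hb⟩
    · simp only [Set.mem_insert_iff, SimpleGraph.mem_neighborSet, not_or] at ha hb
      obtain ⟨hb1, hb2⟩ := hb
      have hs1 : s ≠ u1 := by
        rintro rfl
        exact hb2 hadj.symm
      have hadj1 : G.Adj u1 s := ha.resolve_left hs1
      exact ⟨s, hs1, hb1, adj_one_edist_ne hadj1 hb2 hb1⟩
    · simp only [Set.mem_insert_iff, SimpleGraph.mem_neighborSet, not_or] at ha hb
      obtain ⟨ha1, ha2⟩ := ha
      have hs2 : s ≠ u2 := by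
        rintro rfl
        exact ha2 hadj
      have hadj2 : G.Adj u2 s := hb.resolve_left hs2
      exact ⟨s, ha1, hs2, fun hh => adj_one_edist_ne hadj2 ha2 ha1 hh.symm⟩
  · obtain ⟨s, hs⟩ := not_forall.mp (fun hh => ho (Set.ext hh))
    have hmem : (s ∈ G.neighborSet u1 ∧ s ∉ G.neighborSet u2) ∨
        (s ∉ G.neighborSet u1 ∧ s ∈ G.neighborSet u2) := by tauto
    rcases hmem with ⟨ha, hb⟩ | ⟨ha, hb⟩
    · simp only [SimpleGraph.mem_neighborSet] at ha hb
      have hs2 : s ≠ u2 := by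
        rintro rfl
        exact hadj ha
      exact ⟨s, ha.ne', hs2, adj_one_edist_ne ha hb hs2⟩
    · simp only [SimpleGraph.mem_neighborSet] at ha hb
      have hs1 : s ≠ u1 := by
        rintro rfl
        exact hadj hb.symm
      exact ⟨s, hs1, hb.ne', fun hh => adj_one_edist_ne hb ha hs1 hh.symm⟩

lemma open_twins_of_not_adj {G : SimpleGraph α} {u1 u2 : α} (hT : G.Twins u1 u2)
    (hna : ¬G.Adj u1 u2) : G.neighborSet u1 = G.neighborSet u2 := by
  rcases hT.2 with h | h
  · exfalso
    have : u1 ∈ insert u2 (G.neighborSet u2) := h ▸ Set.mem_insert _ _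
    rcases this with h' | h'
    · exact hT.1 h'
    · exact hna (SimpleGraph.mem_neighborSet _ _ _ |>.mp h').symm
  · exact h

lemma closed_twins_of_adj {G : SimpleGraph α} {u1 u2 : α} (hT : G.Twins u1 u2)
    (hadj : G.Adj u1 u2) :
    insert u1 (G.neighborSet u1) = insert u2 (G.neighborSet u2) := by
  rcases hT.2 with h | h
  · exact h
  · exfalso
    have : u2 ∈ G.neighborSet u2 := h ▸ hadj
    exact G.irrefl this

lemma nonadj_twins_edist_two (G : SimpleGraph α) [Fintype α] (hG : G.Connected)
    (hca : 2 ≤ Fintype.card α) {u1 u2 : α} (hT : G.Twins u1 u2) (hna : ¬G.Adj u1 u2) :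
    G.edist u1 u2 = 2 := by
  obtain ⟨s, hs⟩ := exists_adj_of_connected G hG hca u1
  have hN := open_twins_of_not_adj hT hna
  have hs2 : G.Adj u2 s := by
    have : s ∈ G.neighborSet u2 := hN ▸ hs
    exact this
  refine le_antisymm ?_ (two_le_enat (by simp [hT.1]) ?_)
  · refine le_trans (SimpleGraph.edist_le
      (SimpleGraph.Walk.cons hs (SimpleGraph.Walk.cons hs2.symm SimpleGraph.Walk.nil))) ?_
    simp
  · intro hh
    exact hna (SimpleGraph.edist_eq_one_iff_adj.mp hh)



lemma enat01 : (0 : ℕ∞) ≠ 1 := by decide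
lemma enat02 : (0 : ℕ∞) ≠ 2 := by decide
lemma enat12 : (1 : ℕ∞) ≠ 2 := by decide

/-- `{v} ∪ non-neighbours of v`. -/
noncomputable def colFinset (H : SimpleGraph β) [Fintype β] [DecidableRel H.Adj] (v : β) : Finset β :=
  Finset.univ.filter fun w => w = v ∨ ¬H.Adj v w

/-- `{v} ∪ neighbours of v`. -/
noncomputable def colAdjFinset (H : SimpleGraph β) [Fintype β] [DecidableRel H.Adj] (v : β) : Finset β :=
  Finset.univ.filter fun w => w = v ∨ H.Adj v w

lemma mem_resolvingFinset {V : Type*} {F : SimpleGraph V} [Fintype V] {x y z : V} :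
    z ∈ resolvingFinset F x y ↔ F.edist x z ≠ F.edist y z := by
  simp [resolvingFinset]

lemma self_mem_resolvingFinset {V : Type*} {F : SimpleGraph V} [Fintype V] {x y : V}
    (h : x ≠ y) : x ∈ resolvingFinset F x y := by
  rw [mem_resolvingFinset, SimpleGraph.edist_self]
  intro hh
  exact h (SimpleGraph.edist_eq_zero_iff.mp hh.symm).symm

section Char

variable [Fintype α] [Fintype β] [DecidableEq β]
variable (G : SimpleGraph α) (H : SimpleGraph β) [DecidableRel H.Adj]
variable (hG : G.Connected) (hca : 2 ≤ Fintype.card α)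

include hG hca in
lemma R_same_col {u : α} {v1 v2 : β} (hne : v1 ≠ v2) :
    resolvingFinset (G.lexProd H) (u, v1) (u, v2) = {u} ×ˢ locatingFinset H v1 v2 := by
  ext ⟨t, w⟩
  rw [mem_resolvingFinset, Finset.mem_product, Finset.mem_singleton]
  by_cases ht : t = u
  · subst ht
    rw [lex_edist_col G H hG hca t v1 w, lex_edist_col G H hG hca t v2 w]
    simp only [true_iff, eq_self_iff_true, true_and]
    rw [locatingFinset]
    simp only [Finset.mem_union, Finset.mem_insert, Finset.mem_singleton,
      Finset.mem_symmDiff, SimpleGraph.mem_neighborFinset]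
    by_cases h1 : w = v1 <;> by_cases h2 : w = v2 <;>
      by_cases a1 : H.Adj v1 w <;> by_cases a2 : H.Adj v2 w <;>
      simp_all [enat01, enat02, enat12, enat01.symm, enat02.symm, enat12.symm]
  · have e1 : (G.lexProd H).edist (u, v1) (t, w) = G.edist u t :=
      lex_edist_ne G H hG v1 w (Ne.symm ht)
    have e2 : (G.lexProd H).edist (u, v2) (t, w) = G.edist u t :=
      lex_edist_ne G H hG v2 w (Ne.symm ht)
    rw [e1, e2]
    simp [ht]

include hG hca in
lemma R_twins_adj {u1 u2 : α} (hT : G.Twins u1 u2) (hadj : G.Adj u1 u2) (v1 v2 : β) :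
    resolvingFinset (G.lexProd H) (u1, v1) (u2, v2) =
      {u1} ×ˢ colFinset H v1 ∪ {u2} ×ˢ colFinset H v2 := by
  have hne : u1 ≠ u2 := hT.1
  ext ⟨t, w⟩
  rw [mem_resolvingFinset, Finset.mem_union, Finset.mem_product, Finset.mem_product,
    Finset.mem_singleton, Finset.mem_singleton]
  by_cases h1 : t = u1
  · subst h1
    have e2 : (G.lexProd H).edist (u2, v2) (t, w) = G.edist u2 t :=
      lex_edist_ne G H hG v2 w (Ne.symm hne)
    have e3 : G.edist u2 t = 1 := SimpleGraph.edist_eq_one_iff_adj.mpr hadj.symm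
    rw [lex_edist_col G H hG hca t v1 w, e2, e3]
    simp only [hne, false_and, or_false, true_and, colFinset, Finset.mem_filter,
      Finset.mem_univ, true_and]
    by_cases hw : w = v1 <;> by_cases ha : H.Adj v1 w <;>
      simp_all [enat01, enat02, enat12, enat01.symm, enat02.symm, enat12.symm]
  · by_cases h2 : t = u2
    · subst h2
      have e1 : (G.lexProd H).edist (u1, v1) (t, w) = G.edist u1 t :=
        lex_edist_ne G H hG v1 w hne
      have e3 : G.edist u1 t = 1 := SimpleGraph.edist_eq_one_iff_adj.mpr hadj
      rw [e1, lex_edist_col G H hG hca t v2 w, e3]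
      simp only [h1, false_and, false_or, true_and, colFinset, Finset.mem_filter,
        Finset.mem_univ, true_and]
      by_cases hw : w = v2 <;> by_cases ha : H.Adj v2 w <;>
        simp_all [enat01, enat02, enat12, enat01.symm, enat02.symm, enat12.symm]
    · have e1 : (G.lexProd H).edist (u1, v1) (t, w) = G.edist u1 t :=
        lex_edist_ne G H hG v1 w (fun h => h1 h.symm)
      have e2 : (G.lexProd H).edist (u2, v2) (t, w) = G.edist u2 t :=
        lex_edist_ne G H hG v2 w (fun h => h2 h.symm)
      rw [e1, e2, twins_edist hG hT h1 h2]
      simp [h1, h2]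

include hG hca in
lemma R_twins_nonadj {u1 u2 : α} (hT : G.Twins u1 u2) (hadj : ¬G.Adj u1 u2) (v1 v2 : β) :
    resolvingFinset (G.lexProd H) (u1, v1) (u2, v2) =
      {u1} ×ˢ colAdjFinset H v1 ∪ {u2} ×ˢ colAdjFinset H v2 := by
  have hne : u1 ≠ u2 := hT.1
  have hd2 : G.edist u1 u2 = 2 := nonadj_twins_edist_two G hG hca hT hadj
  ext ⟨t, w⟩
  rw [mem_resolvingFinset, Finset.mem_union, Finset.mem_product, Finset.mem_product,
    Finset.mem_singleton, Finset.mem_singleton]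
  by_cases h1 : t = u1
  · subst h1
    have e2 : (G.lexProd H).edist (u2, v2) (t, w) = G.edist u2 t :=
      lex_edist_ne G H hG v2 w (Ne.symm hne)
    have e3 : G.edist u2 t = 2 := by rw [SimpleGraph.edist_comm, hd2]
    rw [lex_edist_col G H hG hca t v1 w, e2, e3]
    simp only [hne, false_and, or_false, true_and, colAdjFinset, Finset.mem_filter,
      Finset.mem_univ, true_and]
    by_cases hw : w = v1 <;> by_cases ha : H.Adj v1 w <;>
      simp_all [enat01, enat02, enat12, enat01.symm, enat02.symm, enat12.symm]
  · by_cases h2 : t = u2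
    · subst h2
      have e1 : (G.lexProd H).edist (u1, v1) (t, w) = G.edist u1 t :=
        lex_edist_ne G H hG v1 w hne
      rw [e1, lex_edist_col G H hG hca t v2 w, hd2]
      simp only [h1, false_and, false_or, true_and, colAdjFinset, Finset.mem_filter,
        Finset.mem_univ, true_and]
      by_cases hw : w = v2 <;> by_cases ha : H.Adj v2 w <;>
        simp_all [enat01, enat02, enat12, enat01.symm, enat02.symm, enat12.symm]
    · have e1 : (G.lexProd H).edist (u1, v1) (t, w) = G.edist u1 t :=
        lex_edist_ne G H hG v1 w (fun h => h1 h.symm)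
      have e2 : (G.lexProd H).edist (u2, v2) (t, w) = G.edist u2 t :=
        lex_edist_ne G H hG v2 w (fun h => h2 h.symm)
      rw [e1, e2, twins_edist hG hT h1 h2]
      simp [h1, h2]

include hG in
lemma R_nontwins {u1 u2 : α} (hne : u1 ≠ u2) (hnt : ¬G.Twins u1 u2) (v1 v2 : β) :
    ∃ t, ∀ w : β, (t, w) ∈ resolvingFinset (G.lexProd H) (u1, v1) (u2, v2) := by
  obtain ⟨t, ht1, ht2, htd⟩ := not_twins_exists hne hnt
  refine ⟨t, fun w => ?_⟩
  rw [mem_resolvingFinset,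
    lex_edist_ne G H hG v1 w (Ne.symm ht1), lex_edist_ne G H hG v2 w (Ne.symm ht2)]
  exact htd

end Char

lemma locatingFinset_compl (H : SimpleGraph β) [Fintype β] [DecidableEq β]
    [DecidableRel H.Adj] (v1 v2 : β) :
    locatingFinset Hᶜ v1 v2 = locatingFinset H v1 v2 := by
  ext w
  simp only [locatingFinset, Finset.mem_union, Finset.mem_insert, Finset.mem_singleton,
    Finset.mem_symmDiff, SimpleGraph.mem_neighborFinset, SimpleGraph.compl_adj]
  by_cases h1 : w = v1 <;> by_cases h2 : w = v2 <;>
    simp_all <;> tauto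

lemma colFinset_compl (H : SimpleGraph β) [Fintype β] [DecidableEq β]
    [DecidableRel H.Adj] (v : β) :
    colFinset Hᶜ v = colAdjFinset H v := by
  ext w
  simp only [colFinset, colAdjFinset, Finset.mem_filter, Finset.mem_univ, true_and,
    SimpleGraph.compl_adj]
  by_cases h : w = v <;> simp_all <;> tauto

lemma top2_connected : (⊤ : SimpleGraph (Fin 2)).Connected := SimpleGraph.connected_top

lemma top2_card : 2 ≤ Fintype.card (Fin 2) := by simp

lemma top2_twins : (⊤ : SimpleGraph (Fin 2)).Twins 0 1 := by
  refine ⟨by decide, Or.inl ?_⟩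
  ext x
  fin_cases x <;> simp [SimpleGraph.mem_neighborSet]

lemma top2_adj : (⊤ : SimpleGraph (Fin 2)).Adj 0 1 := by simp



section LP

variable {V : Type*} [Fintype V]

lemma isResolvingFn_one (F : SimpleGraph V) : IsResolvingFn F (fun _ => 1) := by
  refine ⟨fun v => ⟨zero_le_one, le_refl 1⟩, fun x y hxy => ?_⟩
  have hx : x ∈ resolvingFinset F x y := self_mem_resolvingFinset hxy
  calc (1 : ℝ) = ∑ _z ∈ ({x} : Finset V), (1 : ℝ) := by simp
    _ ≤ ∑ _z ∈ resolvingFinset F x y, (1 : ℝ) :=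
        Finset.sum_le_sum_of_subset_of_nonneg (Finset.singleton_subset_iff.mpr hx)
          (fun _ _ _ => zero_le_one)

lemma RSet_nonempty (F : SimpleGraph V) :
    {w : ℝ | ∃ g, IsResolvingFn F g ∧ w = ∑ v, g v}.Nonempty :=
  ⟨_, fun _ => 1, isResolvingFn_one F, rfl⟩

lemma RSet_bddBelow (F : SimpleGraph V) :
    BddBelow {w : ℝ | ∃ g, IsResolvingFn F g ∧ w = ∑ v, g v} := by
  refine ⟨0, ?_⟩
  rintro w ⟨g, hg, rfl⟩
  exact Finset.sum_nonneg fun v _ => (hg.1 v).1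

lemma fracMetricDim_le (F : SimpleGraph V) {g : V → ℝ} (hg : IsResolvingFn F g) :
    fracMetricDim F ≤ ∑ v, g v :=
  csInf_le (RSet_bddBelow F) ⟨g, hg, rfl⟩

lemma fracMetricDim_nonneg (F : SimpleGraph V) : 0 ≤ fracMetricDim F := by
  refine le_csInf (RSet_nonempty F) ?_
  rintro w ⟨g, hg, rfl⟩
  exact Finset.sum_nonneg fun v _ => (hg.1 v).1

lemma exists_resolving_lt (F : SimpleGraph V) {ε : ℝ} (hε : 0 < ε) :
    ∃ g, IsResolvingFn F g ∧ ∑ v, g v < fracMetricDim F + ε := by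
  obtain ⟨w, ⟨g, hg, rfl⟩, hlt⟩ := exists_lt_of_csInf_lt (RSet_nonempty F)
    (lt_add_of_pos_right (fracMetricDim F) hε)
  exact ⟨g, hg, hlt⟩

end LP

section LPLoc

variable [Fintype β] [DecidableEq β]
variable (H : SimpleGraph β) [DecidableRel H.Adj]

lemma locating_total (hcb : 2 ≤ Fintype.card β) {g : β → ℝ} (hg : IsLocatingFn H g) :
    1 ≤ ∑ v, g v := by
  obtain ⟨v1, v2, hne⟩ := Fintype.exists_pair_of_one_lt_card (α := β) (by omega)
  calc (1 : ℝ) ≤ ∑ v ∈ locatingFinset H v1 v2, g v := hg.2 v1 v2 hne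
    _ ≤ ∑ v, g v := Finset.sum_le_sum_of_subset_of_nonneg (Finset.subset_univ _)
        (fun v _ _ => (hg.1 v).1)

lemma isLocatingFn_one : IsLocatingFn H (fun _ => 1) := by
  refine ⟨fun v => ⟨zero_le_one, le_refl 1⟩, fun v1 v2 hne => ?_⟩
  have hx : v1 ∈ locatingFinset H v1 v2 := by simp [locatingFinset]
  calc (1 : ℝ) = ∑ _z ∈ ({v1} : Finset β), (1 : ℝ) := by simp
    _ ≤ ∑ _z ∈ locatingFinset H v1 v2, (1 : ℝ) :=
        Finset.sum_le_sum_of_subset_of_nonneg (Finset.singleton_subset_iff.mpr hx)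
          (fun _ _ _ => zero_le_one)

lemma LSet_nonempty : {w : ℝ | ∃ g, IsLocatingFn H g ∧ w = ∑ v, g v}.Nonempty :=
  ⟨_, fun _ => 1, isLocatingFn_one H, rfl⟩

lemma LSet_bddBelow : BddBelow {w : ℝ | ∃ g, IsLocatingFn H g ∧ w = ∑ v, g v} := by
  refine ⟨0, ?_⟩
  rintro w ⟨g, hg, rfl⟩
  exact Finset.sum_nonneg fun v _ => (hg.1 v).1

lemma fracLoc_le {g : β → ℝ} (hg : IsLocatingFn H g) : fracLoc H ≤ ∑ v, g v :=
  csInf_le (LSet_bddBelow H) ⟨g, hg, rfl⟩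

lemma exists_locating_lt {ε : ℝ} (hε : 0 < ε) :
    ∃ g, IsLocatingFn H g ∧ ∑ v, g v < fracLoc H + ε := by
  obtain ⟨w, ⟨g, hg, rfl⟩, hlt⟩ := exists_lt_of_csInf_lt (LSet_nonempty H)
    (lt_add_of_pos_right (fracLoc H) hε)
  exact ⟨g, hg, hlt⟩

lemma sum_singleton_product {γ : Type*} (g : γ × β → ℝ) (u : γ) (S : Finset β) :
    ∑ z ∈ {u} ×ˢ S, g z = ∑ w ∈ S, g (u, w) := by
  rw [Finset.sum_product, Finset.sum_singleton]

lemma sum_pair_product {γ : Type*} (g : γ × β → ℝ) {u1 u2 : γ} (hne : u1 ≠ u2)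
    (S T : Finset β) :
    ∑ z ∈ ({u1} ×ˢ S ∪ {u2} ×ˢ T), g z = ∑ w ∈ S, g (u1, w) + ∑ w ∈ T, g (u2, w) := by
  rw [Finset.sum_union, sum_singleton_product, sum_singleton_product]
  rw [Finset.disjoint_left]
  rintro ⟨p, w⟩ h1 h2
  rw [Finset.mem_product, Finset.mem_singleton] at h1 h2
  exact hne (h1.1 ▸ h2.1 ▸ rfl)

lemma k2_constraint_loc {g : Fin 2 × β → ℝ}
    (hg : IsResolvingFn ((⊤ : SimpleGraph (Fin 2)).lexProd H) g)
    (i : Fin 2) {v1 v2 : β} (hne : v1 ≠ v2) :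
    1 ≤ ∑ w ∈ locatingFinset H v1 v2, g (i, w) := by
  have h := hg.2 (i, v1) (i, v2) (by simp [Prod.ext_iff, hne])
  rwa [R_same_col (⊤ : SimpleGraph (Fin 2)) H top2_connected top2_card hne,
    sum_singleton_product] at h

lemma k2_constraint_col {g : Fin 2 × β → ℝ}
    (hg : IsResolvingFn ((⊤ : SimpleGraph (Fin 2)).lexProd H) g) (v1 v2 : β) :
    1 ≤ ∑ w ∈ colFinset H v1, g (0, w) + ∑ w ∈ colFinset H v2, g (1, w) := by
  have h := hg.2 (0, v1) (1, v2) (by simp [Prod.ext_iff])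
  rwa [R_twins_adj (⊤ : SimpleGraph (Fin 2)) H top2_connected top2_card top2_twins top2_adj,
    sum_pair_product g (by decide : (0 : Fin 2) ≠ 1)] at h

lemma k2_resolving_of {g : Fin 2 × β → ℝ} (h01 : ∀ p, g p ∈ Set.Icc (0 : ℝ) 1)
    (haa : ∀ i : Fin 2, ∀ v1 v2 : β, v1 ≠ v2 → 1 ≤ ∑ w ∈ locatingFinset H v1 v2, g (i, w))
    (hbb : ∀ v1 v2 : β, 1 ≤ ∑ w ∈ colFinset H v1, g (0, w) + ∑ w ∈ colFinset H v2, g (1, w)) :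
    IsResolvingFn ((⊤ : SimpleGraph (Fin 2)).lexProd H) g := by
  refine ⟨h01, ?_⟩
  rintro ⟨i, a⟩ ⟨j, b⟩ hxy
  by_cases hij : i = j
  · subst hij
    have hab : a ≠ b := fun h => hxy (by rw [h])
    rw [R_same_col (⊤ : SimpleGraph (Fin 2)) H top2_connected top2_card hab,
      sum_singleton_product]
    exact haa i a b hab
  · have hcases : (i = 0 ∧ j = 1) ∨ (i = 1 ∧ j = 0) := by omega
    rcases hcases with ⟨rfl, rfl⟩ | ⟨rfl, rfl⟩
    · rw [R_twins_adj (⊤ : SimpleGraph (Fin 2)) H top2_connected top2_card top2_twins top2_adj,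
        sum_pair_product g (by decide : (0 : Fin 2) ≠ 1)]
      exact hbb a b
    · rw [R_twins_adj (⊤ : SimpleGraph (Fin 2)) H top2_connected top2_card
          (twins_symm top2_twins) top2_adj.symm,
        sum_pair_product g (by decide : (1 : Fin 2) ≠ 0)]
      linarith [hbb b a]

end LPLoc



section Avg

variable {γ : Type*}

lemma sum_sigma_swap (S : Finset γ) (C : γ → Finset γ)
    (hsym : ∀ u w, u ∈ S → w ∈ C u → (w ∈ S ∧ u ∈ C w)) (F : γ → γ → ℝ) :
    ∑ u ∈ S, ∑ w ∈ C u, F u w = ∑ u ∈ S, ∑ w ∈ C u, F w u := by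
  rw [← Finset.sum_sigma S C (fun p => F p.1 p.2),
    ← Finset.sum_sigma S C (fun p => F p.2 p.1)]
  refine Finset.sum_nbij' (fun p => ⟨p.2, p.1⟩) (fun p => ⟨p.2, p.1⟩) ?_ ?_ ?_ ?_ ?_
  · rintro ⟨a, b⟩ hp
    rw [Finset.mem_sigma] at hp ⊢
    exact hsym a b hp.1 hp.2
  · rintro ⟨a, b⟩ hp
    rw [Finset.mem_sigma] at hp ⊢
    exact hsym a b hp.1 hp.2
  · rintro ⟨a, b⟩ _; rfl
  · rintro ⟨a, b⟩ _; rfl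
  · rintro ⟨a, b⟩ _; rfl

lemma class_sum_lb (C : Finset γ) (col : γ → ℝ) (d : ℝ) (hcard : 2 ≤ C.card)
    (hpair : ∀ w ∈ C, ∀ w' ∈ C, w ≠ w' → d ≤ col w + col w') :
    (C.card : ℝ) * d / 2 ≤ ∑ w ∈ C, col w := by
  have hm : (2 : ℝ) ≤ (C.card : ℝ) := by exact_mod_cast hcard
  have hinner : ∀ w ∈ C, ∑ w' ∈ C.erase w, (col w + col w') =
      ((C.card : ℝ) - 2) * col w + ∑ w' ∈ C, col w' := by
    intro w hw
    rw [Finset.sum_add_distrib, Finset.sum_const, Finset.sum_erase_eq_sub hw,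
      Finset.card_erase_of_mem hw, nsmul_eq_mul]
    have : ((C.card - 1 : ℕ) : ℝ) = (C.card : ℝ) - 1 := by
      have : 1 ≤ C.card := by omega
      push_cast [this]; ring
    rw [this]; ring
  have hlower : ∀ w ∈ C, ((C.card : ℝ) - 1) * d ≤ ∑ w' ∈ C.erase w, (col w + col w') := by
    intro w hw
    have hb : ∀ w' ∈ C.erase w, d ≤ col w + col w' := fun w' hw' =>
      hpair w hw w' (Finset.mem_of_mem_erase hw')
        (fun h => (Finset.ne_of_mem_erase hw') h.symm)
    calc ((C.card : ℝ) - 1) * d = (C.erase w).card • d := by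
          rw [Finset.card_erase_of_mem hw, nsmul_eq_mul]
          have : 1 ≤ C.card := by omega
          push_cast [this]; ring
      _ ≤ ∑ w' ∈ C.erase w, (col w + col w') := Finset.card_nsmul_le_sum _ _ _ hb
  have htot : (C.card : ℝ) * (((C.card : ℝ) - 1) * d) ≤
      ((C.card : ℝ) - 2) * ∑ w ∈ C, col w + (C.card : ℝ) * ∑ w ∈ C, col w := by
    calc (C.card : ℝ) * (((C.card : ℝ) - 1) * d) = ∑ _w ∈ C, ((C.card : ℝ) - 1) * d := by
          rw [Finset.sum_const, nsmul_eq_mul]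
      _ ≤ ∑ w ∈ C, ∑ w' ∈ C.erase w, (col w + col w') := Finset.sum_le_sum hlower
      _ = ∑ w ∈ C, (((C.card : ℝ) - 2) * col w + ∑ w' ∈ C, col w') :=
          Finset.sum_congr rfl hinner
      _ = ((C.card : ℝ) - 2) * ∑ w ∈ C, col w + (C.card : ℝ) * ∑ w ∈ C, col w := by
          rw [Finset.sum_add_distrib, Finset.sum_const, ← Finset.mul_sum, nsmul_eq_mul]
  nlinarith [htot, hm]

lemma avg_bound (S : Finset γ) (C : γ → Finset γ) (col : γ → ℝ) (d : ℝ)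
    (hmem : ∀ u ∈ S, u ∈ C u)
    (hCeq : ∀ u ∈ S, ∀ w ∈ C u, w ∈ S ∧ C w = C u)
    (hcard : ∀ u ∈ S, 2 ≤ (C u).card)
    (hpair : ∀ u ∈ S, ∀ w ∈ C u, ∀ w' ∈ C u, w ≠ w' → d ≤ col w + col w') :
    (S.card : ℝ) * d / 2 ≤ ∑ u ∈ S, col u := by
  have hsym : ∀ u w, u ∈ S → w ∈ C u → (w ∈ S ∧ u ∈ C w) := fun u w hu hw =>
    ⟨(hCeq u hu w hw).1, (hCeq u hu w hw).2.symm ▸ hmem u hu⟩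
  have key : ∑ u ∈ S, col u = ∑ u ∈ S, (∑ w ∈ C u, col w) / (C u).card := by
    have h1 : ∀ u ∈ S, (∑ w ∈ C u, col w) / ((C u).card : ℝ) =
        ∑ w ∈ C u, col w / ((C w).card : ℝ) := by
      intro u hu
      rw [Finset.sum_div]
      exact Finset.sum_congr rfl fun w hw => by rw [(hCeq u hu w hw).2]
    rw [Finset.sum_congr rfl h1,
      sum_sigma_swap S C hsym (fun u w => col w / ((C w).card : ℝ))]
    refine Finset.sum_congr rfl fun u hu => ?_
    rw [Finset.sum_const, nsmul_eq_mul]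
    have hne : ((C u).card : ℝ) ≠ 0 := by
      have := hcard u hu; positivity
    field_simp
  rw [key]
  have hbound : ∀ u ∈ S, d / 2 ≤ (∑ w ∈ C u, col w) / ((C u).card : ℝ) := by
    intro u hu
    have h := class_sum_lb (C u) col d (hcard u hu) (hpair u hu)
    have hpos : (0 : ℝ) < ((C u).card : ℝ) := by
      have h2 := hcard u hu
      have : 0 < (C u).card := by omega
      exact_mod_cast this
    rw [le_div_iff₀ hpos]
    calc d / 2 * ((C u).card : ℝ) = ((C u).card : ℝ) * d / 2 := by ring
      _ ≤ ∑ w ∈ C u, col w := h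
  calc (S.card : ℝ) * d / 2 = S.card • (d / 2) := by
        rw [nsmul_eq_mul]; ring
    _ ≤ ∑ u ∈ S, (∑ w ∈ C u, col w) / ((C u).card : ℝ) :=
        Finset.card_nsmul_le_sum _ _ _ hbound

end Avg


section TwinClasses

variable {α : Type*} [Fintype α] {G : SimpleGraph α}

/-- The twin equivalence class of a vertex. -/
noncomputable def twinClass (G : SimpleGraph α) [Fintype α] (u : α) : Finset α :=
  Finset.univ.filter fun w => w = u ∨ G.Twins u w

lemma mem_twinClass {u w : α} : w ∈ twinClass G u ↔ (w = u ∨ G.Twins u w) := by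
  simp [twinClass]

lemma self_mem_twinClass (u : α) : u ∈ twinClass G u := mem_twinClass.mpr (Or.inl rfl)

lemma twins_excl {u : α} :
    ¬((∃ w, G.Twins u w ∧ G.Adj u w) ∧ (∃ w, G.Twins u w ∧ ¬G.Adj u w)) := by
  rintro ⟨⟨w1, ht1, ha1⟩, ⟨w2, ht2, ha2⟩⟩
  have Nc := closed_twins_of_adj ht1 ha1
  have No := open_twins_of_not_adj ht2 ha2
  have h1 : G.Adj w2 w1 := by
    have : w1 ∈ G.neighborSet w2 := No ▸ ((SimpleGraph.mem_neighborSet G u w1).mpr ha1)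
    exact (SimpleGraph.mem_neighborSet G w2 w1).mp this
  have h2 : w2 ∈ insert u (G.neighborSet u) := by
    rw [Nc]
    exact Set.mem_insert_iff.mpr (Or.inr ((SimpleGraph.mem_neighborSet G w1 w2).mpr h1.symm))
  rcases Set.mem_insert_iff.mp h2 with h2 | h2
  · exact ht2.1 h2.symm
  · exact ha2 ((SimpleGraph.mem_neighborSet G u w2).mp h2)

lemma type2_twin_adj {u : α} (h2 : ∃ w, G.Twins u w ∧ G.Adj u w) {x : α}
    (ht : G.Twins u x) : G.Adj u x := by
  by_contra hna
  exact twins_excl ⟨h2, ⟨x, ht, hna⟩⟩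

lemma type3_twin_nonadj {u : α} (h3 : ∃ w, G.Twins u w ∧ ¬G.Adj u w) {x : α}
    (ht : G.Twins u x) : ¬G.Adj u x := by
  intro ha
  exact twins_excl ⟨⟨x, ht, ha⟩, h3⟩

lemma type2_class_char {u : α} (h2 : ∃ w, G.Twins u w ∧ G.Adj u w) (x : α) :
    x ∈ twinClass G u ↔ insert x (G.neighborSet x) = insert u (G.neighborSet u) := by
  rw [mem_twinClass]
  constructor
  · rintro (rfl | ht)
    · rfl
    · exact (closed_twins_of_adj ht (type2_twin_adj h2 ht)).symm
  · intro hx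
    by_cases hxu : x = u
    · exact Or.inl hxu
    · exact Or.inr ⟨Ne.symm hxu, Or.inl hx.symm⟩

lemma type3_class_char {u : α} (h3 : ∃ w, G.Twins u w ∧ ¬G.Adj u w) (x : α) :
    x ∈ twinClass G u ↔ G.neighborSet x = G.neighborSet u := by
  rw [mem_twinClass]
  constructor
  · rintro (rfl | ht)
    · rfl
    · exact (open_twins_of_not_adj ht (type3_twin_nonadj h3 ht)).symm
  · intro hx
    by_cases hxu : x = u
    · exact Or.inl hxu
    · exact Or.inr ⟨Ne.symm hxu, Or.inr hx.symm⟩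

lemma type2_mem_p2 {u : α} (h2 : ∃ w, G.Twins u w ∧ G.Adj u w) {w : α}
    (hw : w ∈ twinClass G u) : ∃ w', G.Twins w w' ∧ G.Adj w w' := by
  rcases mem_twinClass.mp hw with rfl | ht
  · exact h2
  · exact ⟨u, twins_symm ht, (type2_twin_adj h2 ht).symm⟩

lemma type3_mem_p3 {u : α} (h3 : ∃ w, G.Twins u w ∧ ¬G.Adj u w) {w : α}
    (hw : w ∈ twinClass G u) : ∃ w', G.Twins w w' ∧ ¬G.Adj w w' := by
  rcases mem_twinClass.mp hw with rfl | ht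
  · exact h3
  · exact ⟨u, twins_symm ht, fun ha => (type3_twin_nonadj h3 ht) ha.symm⟩

lemma type2_class_eq {u : α} (h2 : ∃ w, G.Twins u w ∧ G.Adj u w) {w : α}
    (hw : w ∈ twinClass G u) : twinClass G w = twinClass G u := by
  have hwu : insert w (G.neighborSet w) = insert u (G.neighborSet u) :=
    (type2_class_char h2 w).mp hw
  ext x
  rw [type2_class_char (type2_mem_p2 h2 hw) x, type2_class_char h2 x, hwu]

lemma type3_class_eq {u : α} (h3 : ∃ w, G.Twins u w ∧ ¬G.Adj u w) {w : α}
    (hw : w ∈ twinClass G u) : twinClass G w = twinClass G u := by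
  have hwu : G.neighborSet w = G.neighborSet u := (type3_class_char h3 w).mp hw
  ext x
  rw [type3_class_char (type3_mem_p3 h3 hw) x, type3_class_char h3 x, hwu]

lemma type2_class_pair {u : α} (h2 : ∃ w, G.Twins u w ∧ G.Adj u w) {w w' : α}
    (hw : w ∈ twinClass G u) (hw' : w' ∈ twinClass G u) (hne : w ≠ w') :
    G.Twins w w' ∧ G.Adj w w' := by
  have e1 := (type2_class_char h2 w).mp hw
  have e2 := (type2_class_char h2 w').mp hw'
  have htw : G.Twins w w' := ⟨hne, Or.inl (e1.trans e2.symm)⟩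
  refine ⟨htw, ?_⟩
  have hw'mem : w' ∈ insert u (G.neighborSet u) := by
    rcases mem_twinClass.mp hw' with rfl | ht
    · exact Set.mem_insert _ _
    · exact Set.mem_insert_iff.mpr
        (Or.inr ((SimpleGraph.mem_neighborSet G u w').mpr (type2_twin_adj h2 ht)))
  rw [← e1] at hw'mem
  rcases Set.mem_insert_iff.mp hw'mem with h | h
  · exact absurd h.symm hne
  · exact (SimpleGraph.mem_neighborSet G w w').mp h

lemma type3_class_pair {u : α} (h3 : ∃ w, G.Twins u w ∧ ¬G.Adj u w) {w w' : α}
    (hw : w ∈ twinClass G u) (hw' : w' ∈ twinClass G u) (hne : w ≠ w') :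
    G.Twins w w' ∧ ¬G.Adj w w' := by
  have e1 := (type3_class_char h3 w).mp hw
  have e2 := (type3_class_char h3 w').mp hw'
  have htw : G.Twins w w' := ⟨hne, Or.inr (e1.trans e2.symm)⟩
  refine ⟨htw, ?_⟩
  intro ha
  have hw'Nu : w' ∈ G.neighborSet u := e1 ▸ ((SimpleGraph.mem_neighborSet G w w').mpr ha)
  have hadj : G.Adj u w' := (SimpleGraph.mem_neighborSet G u w').mp hw'Nu
  rcases mem_twinClass.mp hw' with rfl | ht
  · exact G.irrefl hadj
  · exact (type3_twin_nonadj h3 ht) hadj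

lemma type2_class_card {u : α} (h2 : ∃ w, G.Twins u w ∧ G.Adj u w) :
    2 ≤ (twinClass G u).card := by
  obtain ⟨w, ht, _⟩ := h2
  refine Finset.one_lt_card.mpr ⟨u, self_mem_twinClass u, w, ?_, ht.1⟩
  exact mem_twinClass.mpr (Or.inr ht)

lemma type3_class_card {u : α} (h3 : ∃ w, G.Twins u w ∧ ¬G.Adj u w) :
    2 ≤ (twinClass G u).card := by
  obtain ⟨w, ht, _⟩ := h3
  refine Finset.one_lt_card.mpr ⟨u, self_mem_twinClass u, w, ?_, ht.1⟩
  exact mem_twinClass.mpr (Or.inr ht)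

lemma sum_univ_split (col : α → ℝ) :
    ∑ u, col u =
      ∑ u ∈ Finset.univ.filter (fun u => ∀ w, ¬G.Twins u w), col u +
      ∑ u ∈ Finset.univ.filter (fun u => ∃ w, G.Twins u w ∧ G.Adj u w), col u +
      ∑ u ∈ Finset.univ.filter (fun u => ∃ w, G.Twins u w ∧ ¬G.Adj u w), col u := by
  classical
  rw [← Finset.sum_filter_add_sum_filter_not Finset.univ (fun u => ∀ w, ¬G.Twins u w) col]
  rw [add_assoc]
  congr 1
  rw [← Finset.sum_filter_add_sum_filter_not
    (Finset.univ.filter (fun u => ¬∀ w, ¬G.Twins u w))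
    (fun u => ∃ w, G.Twins u w ∧ G.Adj u w) col]
  congr 1
  · rw [Finset.filter_filter]
    apply Finset.sum_congr _ (fun _ _ => rfl)
    apply Finset.filter_congr
    intro u _
    constructor
    · rintro ⟨_, h⟩; exact h
    · rintro ⟨w, ht, ha⟩
      exact ⟨by push_neg; exact ⟨w, ht⟩, ⟨w, ht, ha⟩⟩
  · rw [Finset.filter_filter]
    apply Finset.sum_congr _ (fun _ _ => rfl)
    apply Finset.filter_congr
    intro u _
    constructor
    · rintro ⟨h1, h2⟩
      push_neg at h1
      obtain ⟨w, ht⟩ := h1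
      by_cases ha : G.Adj u w
      · exact absurd ⟨w, ht, ha⟩ h2
      · exact ⟨w, ht, ha⟩
    · rintro ⟨w, ht, hna⟩
      refine ⟨by push_neg; exact ⟨w, ht⟩, ?_⟩
      intro h2
      exact twins_excl ⟨h2, ⟨w, ht, hna⟩⟩

end TwinClasses


section Main

variable [Fintype α] [Fintype β] [DecidableEq β]
variable (G : SimpleGraph α) (H : SimpleGraph β) [DecidableRel H.Adj]
variable (hG : G.Connected) (hca : 2 ≤ Fintype.card α) (hcb : 2 ≤ Fintype.card β)

include hG hca in
lemma col_locating {g : α × β → ℝ} (hg : IsResolvingFn (G.lexProd H) g) (u : α) :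
    IsLocatingFn H (fun v => g (u, v)) := by
  refine ⟨fun v => hg.1 _, fun v1 v2 hne => ?_⟩
  have h := hg.2 (u, v1) (u, v2) (by simp [Prod.ext_iff, hne])
  rwa [R_same_col G H hG hca hne, sum_singleton_product] at h

include hG hca in
lemma pair_bound_adj {g : α × β → ℝ} (hg : IsResolvingFn (G.lexProd H) g)
    {u1 u2 : α} (hT : G.Twins u1 u2) (hadj : G.Adj u1 u2) :
    fracMetricDim ((⊤ : SimpleGraph (Fin 2)).lexProd H) ≤
      (∑ v, g (u1, v)) + ∑ v, g (u2, v) := by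
  set g' : Fin 2 × β → ℝ := fun p => if p.1 = 0 then g (u1, p.2) else g (u2, p.2) with hg'
  have hres : IsResolvingFn ((⊤ : SimpleGraph (Fin 2)).lexProd H) g' := by
    refine k2_resolving_of H ?_ ?_ ?_
    · intro p
      by_cases h : p.1 = 0 <;> simp only [hg', h, if_true, if_false] <;> exact hg.1 _
    · intro i v1 v2 hne
      fin_cases i
      · simpa only [hg', Fin.zero_eta, if_pos rfl] using (col_locating G H hG hca hg u1).2 v1 v2 hne
      · have : ((1 : Fin 2) = 0) = False := by simp
        simpa only [hg', Fin.mk_one, this, if_false] using (col_locating G H hG hca hg u2).2 v1 v2 hne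
    · intro v1 v2
      have h := hg.2 (u1, v1) (u2, v2) (by simp [Prod.ext_iff, hT.1])
      rw [R_twins_adj G H hG hca hT hadj, sum_pair_product g hT.1] at h
      simpa only [hg', if_pos rfl, if_neg (by decide : ¬(1 : Fin 2) = 0)] using h
  have hsum : ∑ p : Fin 2 × β, g' p = (∑ v, g (u1, v)) + ∑ v, g (u2, v) := by
    rw [Fintype.sum_prod_type, Fin.sum_univ_two]
    simp only [hg', if_pos rfl, if_neg (by decide : ¬(1 : Fin 2) = 0)]
  calc fracMetricDim ((⊤ : SimpleGraph (Fin 2)).lexProd H) ≤ ∑ p : Fin 2 × β, g' p :=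
        fracMetricDim_le _ hres
    _ = _ := hsum

include hG hca in
lemma pair_bound_nonadj {g : α × β → ℝ} (hg : IsResolvingFn (G.lexProd H) g)
    {u1 u2 : α} (hT : G.Twins u1 u2) (hadj : ¬G.Adj u1 u2) :
    fracMetricDim ((⊤ : SimpleGraph (Fin 2)).lexProd Hᶜ) ≤
      (∑ v, g (u1, v)) + ∑ v, g (u2, v) := by
  set g' : Fin 2 × β → ℝ := fun p => if p.1 = 0 then g (u1, p.2) else g (u2, p.2) with hg'
  have hres : IsResolvingFn ((⊤ : SimpleGraph (Fin 2)).lexProd Hᶜ) g' := by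
    refine k2_resolving_of Hᶜ ?_ ?_ ?_
    · intro p
      by_cases h : p.1 = 0 <;> simp only [hg', h, if_true, if_false] <;> exact hg.1 _
    · intro i v1 v2 hne
      rw [locatingFinset_compl H v1 v2]
      fin_cases i
      · simpa only [hg', Fin.zero_eta, if_pos rfl] using (col_locating G H hG hca hg u1).2 v1 v2 hne
      · have : ((1 : Fin 2) = 0) = False := by simp
        simpa only [hg', Fin.mk_one, this, if_false] using (col_locating G H hG hca hg u2).2 v1 v2 hne
    · intro v1 v2
      rw [colFinset_compl H v1, colFinset_compl H v2]
      have h := hg.2 (u1, v1) (u2, v2) (by simp [Prod.ext_iff, hT.1])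
      rw [R_twins_nonadj G H hG hca hT hadj, sum_pair_product g hT.1] at h
      simpa only [hg', if_pos rfl, if_neg (by decide : ¬(1 : Fin 2) = 0)] using h
  have hsum : ∑ p : Fin 2 × β, g' p = (∑ v, g (u1, v)) + ∑ v, g (u2, v) := by
    rw [Fintype.sum_prod_type, Fin.sum_univ_two]
    simp only [hg', if_pos rfl, if_neg (by decide : ¬(1 : Fin 2) = 0)]
  calc fracMetricDim ((⊤ : SimpleGraph (Fin 2)).lexProd Hᶜ) ≤ ∑ p : Fin 2 × β, g' p :=
        fracMetricDim_le _ hres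
    _ = _ := hsum

lemma m1_eq : m1 G = (Finset.univ.filter fun u => ∀ w, ¬G.Twins u w).card := rfl
lemma m2_eq : m2 G = (Finset.univ.filter fun u => ∃ w, G.Twins u w ∧ G.Adj u w).card := rfl
lemma m3_eq : m3 G = (Finset.univ.filter fun u => ∃ w, G.Twins u w ∧ ¬G.Adj u w).card := rfl

include hG hca in
lemma lower_bound {g : α × β → ℝ} (hg : IsResolvingFn (G.lexProd H) g) :
    (m1 G : ℝ) * fracLoc H +
      (m2 G : ℝ) / 2 * fracMetricDim ((⊤ : SimpleGraph (Fin 2)).lexProd H) +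
      (m3 G : ℝ) / 2 * fracMetricDim ((⊤ : SimpleGraph (Fin 2)).lexProd Hᶜ) ≤
      ∑ z, g z := by
  set d1 := fracLoc H with hd1
  set d2 := fracMetricDim ((⊤ : SimpleGraph (Fin 2)).lexProd H) with hd2
  set d3 := fracMetricDim ((⊤ : SimpleGraph (Fin 2)).lexProd Hᶜ) with hd3
  set col : α → ℝ := fun u => ∑ v, g (u, v) with hcol
  have hsplit : ∑ z, g z =
      ∑ u ∈ Finset.univ.filter (fun u => ∀ w, ¬G.Twins u w), col u +
      ∑ u ∈ Finset.univ.filter (fun u => ∃ w, G.Twins u w ∧ G.Adj u w), col u +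
      ∑ u ∈ Finset.univ.filter (fun u => ∃ w, G.Twins u w ∧ ¬G.Adj u w), col u := by
    rw [Fintype.sum_prod_type, ← sum_univ_split col]
  have hT1 : (m1 G : ℝ) * d1 ≤
      ∑ u ∈ Finset.univ.filter (fun u => ∀ w, ¬G.Twins u w), col u := by
    rw [m1_eq]
    calc ((Finset.univ.filter fun u => ∀ w, ¬G.Twins u w).card : ℝ) * d1
        = (Finset.univ.filter fun u => ∀ w, ¬G.Twins u w).card • d1 := by
          rw [nsmul_eq_mul]
      _ ≤ _ := Finset.card_nsmul_le_sum _ _ _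
          (fun u _ => fracLoc_le H (col_locating G H hG hca hg u))
  have hT2 : (m2 G : ℝ) * d2 / 2 ≤
      ∑ u ∈ Finset.univ.filter (fun u => ∃ w, G.Twins u w ∧ G.Adj u w), col u := by
    rw [m2_eq]
    refine avg_bound _ (twinClass G) col d2 ?_ ?_ ?_ ?_
    · exact fun u _ => self_mem_twinClass u
    · intro u hu w hw
      have hp2 : ∃ w', G.Twins u w' ∧ G.Adj u w' := (Finset.mem_filter.mp hu).2
      exact ⟨Finset.mem_filter.mpr ⟨Finset.mem_univ _, type2_mem_p2 hp2 hw⟩,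
        type2_class_eq hp2 hw⟩
    · intro u hu
      exact type2_class_card (Finset.mem_filter.mp hu).2
    · intro u hu w hw w' hw' hne
      obtain ⟨htw, hadj⟩ := type2_class_pair (Finset.mem_filter.mp hu).2 hw hw' hne
      exact pair_bound_adj G H hG hca hg htw hadj
  have hT3 : (m3 G : ℝ) * d3 / 2 ≤
      ∑ u ∈ Finset.univ.filter (fun u => ∃ w, G.Twins u w ∧ ¬G.Adj u w), col u := by
    rw [m3_eq]
    refine avg_bound _ (twinClass G) col d3 ?_ ?_ ?_ ?_
    · exact fun u _ => self_mem_twinClass u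
    · intro u hu w hw
      have hp3 : ∃ w', G.Twins u w' ∧ ¬G.Adj u w' := (Finset.mem_filter.mp hu).2
      exact ⟨Finset.mem_filter.mpr ⟨Finset.mem_univ _, type3_mem_p3 hp3 hw⟩,
        type3_class_eq hp3 hw⟩
    · intro u hu
      exact type3_class_card (Finset.mem_filter.mp hu).2
    · intro u hu w hw w' hw' hne
      obtain ⟨htw, hadj⟩ := type3_class_pair (Finset.mem_filter.mp hu).2 hw hw' hne
      exact pair_bound_nonadj G H hG hca hg htw hadj
  rw [hsplit]
  have e2 : (m2 G : ℝ) / 2 * d2 = (m2 G : ℝ) * d2 / 2 := by ring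
  have e3 : (m3 G : ℝ) / 2 * d3 = (m3 G : ℝ) * d3 / 2 := by ring
  rw [e2, e3]
  linarith [hT1, hT2, hT3]

include hG hca hcb in
lemma upper_construct (gL h2 h3 : β → ℝ)
    (hgL : IsLocatingFn H gL)
    (h2mem : ∀ v, h2 v ∈ Set.Icc (0:ℝ) 1) (h2loc : IsLocatingFn H h2)
    (h2col : ∀ v1 v2 : β, 1 ≤ ∑ w ∈ colFinset H v1, h2 w + ∑ w ∈ colFinset H v2, h2 w)
    (h3mem : ∀ v, h3 v ∈ Set.Icc (0:ℝ) 1) (h3loc : IsLocatingFn H h3)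
    (h3col : ∀ v1 v2 : β, 1 ≤ ∑ w ∈ colAdjFinset H v1, h3 w + ∑ w ∈ colAdjFinset H v2, h3 w) :
    fracMetricDim (G.lexProd H) ≤
      (m1 G : ℝ) * ∑ v, gL v + (m2 G : ℝ) * ∑ v, h2 v + (m3 G : ℝ) * ∑ v, h3 v := by
  set g : α × β → ℝ := fun z =>
    if ∀ w, ¬G.Twins z.1 w then gL z.2
    else if ∃ w, G.Twins z.1 w ∧ G.Adj z.1 w then h2 z.2 else h3 z.2 with hgdef
  have hp3_of : ∀ u : α, ¬(∀ w, ¬G.Twins u w) → ¬(∃ w, G.Twins u w ∧ G.Adj u w) →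
      (∃ w, G.Twins u w ∧ ¬G.Adj u w) := by
    intro u hh1 hh2
    push_neg at hh1
    obtain ⟨w, ht⟩ := hh1
    exact ⟨w, ht, fun ha => hh2 ⟨w, ht, ha⟩⟩
  have hb1 : ∀ u : α, (∀ w, ¬G.Twins u w) → ∀ v, g (u, v) = gL v := by
    intro u hu v
    simp only [hgdef]
    rw [if_pos hu]
  have hb2 : ∀ u : α, (∃ w, G.Twins u w ∧ G.Adj u w) → ∀ v, g (u, v) = h2 v := by
    intro u hu v
    have hnp1 : ¬(∀ w, ¬G.Twins u w) := by
      push_neg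
      obtain ⟨w, ht, _⟩ := hu
      exact ⟨w, ht⟩
    simp only [hgdef]
    rw [if_neg hnp1, if_pos hu]
  have hb3 : ∀ u : α, (∃ w, G.Twins u w ∧ ¬G.Adj u w) → ∀ v, g (u, v) = h3 v := by
    intro u hu v
    have hnp1 : ¬(∀ w, ¬G.Twins u w) := by
      push_neg
      obtain ⟨w, ht, _⟩ := hu
      exact ⟨w, ht⟩
    have hnp2 : ¬(∃ w, G.Twins u w ∧ G.Adj u w) := fun hp2 => twins_excl ⟨hp2, hu⟩
    simp only [hgdef]
    rw [if_neg hnp1, if_neg hnp2]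
  have hcolfun : ∀ u : α, (fun v => g (u, v)) = gL ∨ (fun v => g (u, v)) = h2 ∨
      (fun v => g (u, v)) = h3 := by
    intro u
    by_cases hp1 : ∀ w, ¬G.Twins u w
    · exact Or.inl (funext (hb1 u hp1))
    · by_cases hp2 : ∃ w, G.Twins u w ∧ G.Adj u w
      · exact Or.inr (Or.inl (funext (hb2 u hp2)))
      · exact Or.inr (Or.inr (funext (hb3 u (hp3_of u hp1 hp2))))
  have hmemIcc : ∀ z, g z ∈ Set.Icc (0:ℝ) 1 := by
    rintro ⟨u, v⟩
    rcases hcolfun u with h | h | h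
    · rw [show g (u, v) = gL v from congrFun h v]
      exact hgL.1 v
    · rw [show g (u, v) = h2 v from congrFun h v]
      exact h2mem v
    · rw [show g (u, v) = h3 v from congrFun h v]
      exact h3mem v
  have hcolloc : ∀ u : α, IsLocatingFn H (fun v => g (u, v)) := by
    intro u
    rcases hcolfun u with h | h | h <;> rw [h]
    · exact hgL
    · exact h2loc
    · exact h3loc
  have hcoltot : ∀ u : α, 1 ≤ ∑ v, g (u, v) := by
    intro u
    exact locating_total H hcb (hcolloc u)
  have hres : IsResolvingFn (G.lexProd H) g := by
    refine ⟨hmemIcc, ?_⟩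
    rintro ⟨a1, b1⟩ ⟨a2, b2⟩ hxy
    by_cases ha : a1 = a2
    · subst ha
      have hb : b1 ≠ b2 := by
        intro h
        exact hxy (by rw [h])
      rw [R_same_col G H hG hca hb, sum_singleton_product]
      exact (hcolloc a1).2 b1 b2 hb
    · by_cases htw : G.Twins a1 a2
      · by_cases hadj : G.Adj a1 a2
        · rw [R_twins_adj G H hG hca htw hadj, sum_pair_product g htw.1,
            Finset.sum_congr rfl (fun w _ => hb2 a1 ⟨a2, htw, hadj⟩ w),
            Finset.sum_congr rfl (fun w _ => hb2 a2 ⟨a1, twins_symm htw, hadj.symm⟩ w)]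
          exact h2col b1 b2
        · rw [R_twins_nonadj G H hG hca htw hadj, sum_pair_product g htw.1,
            Finset.sum_congr rfl (fun w _ => hb3 a1 ⟨a2, htw, hadj⟩ w),
            Finset.sum_congr rfl (fun w _ => hb3 a2
              ⟨a1, twins_symm htw, fun h => hadj h.symm⟩ w)]
          exact h3col b1 b2
      · obtain ⟨t, htall⟩ := R_nontwins G H hG ha htw b1 b2
        have hsub : ({t} ×ˢ Finset.univ : Finset (α × β)) ⊆
            resolvingFinset (G.lexProd H) (a1, b1) (a2, b2) := by
          rintro ⟨p, w⟩ hp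
          rw [Finset.mem_product, Finset.mem_singleton] at hp
          have hp1 : p = t := hp.1
          rw [hp1]
          exact htall w
        calc (1 : ℝ) ≤ ∑ v, g (t, v) := hcoltot t
          _ = ∑ z ∈ ({t} ×ˢ Finset.univ : Finset (α × β)), g z :=
              (sum_singleton_product g t Finset.univ).symm
          _ ≤ ∑ z ∈ resolvingFinset (G.lexProd H) (a1, b1) (a2, b2), g z :=
              Finset.sum_le_sum_of_subset_of_nonneg hsub (fun z _ _ => (hmemIcc z).1)
  have hsum : ∑ z, g z =
      (m1 G : ℝ) * ∑ v, gL v + (m2 G : ℝ) * ∑ v, h2 v + (m3 G : ℝ) * ∑ v, h3 v := by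
    rw [Fintype.sum_prod_type, sum_univ_split (G := G) (fun u => ∑ v, g (u, v))]
    congr 1
    · congr 1
      · rw [Finset.sum_congr rfl (fun u hu => Finset.sum_congr rfl
          (fun v _ => hb1 u (Finset.mem_filter.mp hu).2 v)), Finset.sum_const, m1_eq,
          nsmul_eq_mul]
      · rw [Finset.sum_congr rfl (fun u hu => Finset.sum_congr rfl
          (fun v _ => hb2 u (Finset.mem_filter.mp hu).2 v)), Finset.sum_const, m2_eq,
          nsmul_eq_mul]
    · rw [Finset.sum_congr rfl (fun u hu => Finset.sum_congr rfl
        (fun v _ => hb3 u (Finset.mem_filter.mp hu).2 v)), Finset.sum_const, m3_eq,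
        nsmul_eq_mul]
  rw [← hsum]
  exact fracMetricDim_le _ hres

/-- symmetrised column average of a function on `K₂[H]`. -/
noncomputable def symAvg (g2 : Fin 2 × β → ℝ) : β → ℝ := fun v => (g2 (0, v) + g2 (1, v)) / 2

lemma symAvg_mem {g2 : Fin 2 × β → ℝ} (h : ∀ p, g2 p ∈ Set.Icc (0:ℝ) 1) (v : β) :
    symAvg g2 v ∈ Set.Icc (0:ℝ) 1 := by
  have h0 := h (0, v); have h1 := h (1, v)
  constructor
  · have := h0.1; have := h1.1; unfold symAvg; linarith
  · have := h0.2; have := h1.2; unfold symAvg; linarith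

lemma symAvg_sum_eq (g2 : Fin 2 × β → ℝ) : ∑ v, symAvg g2 v = (∑ p, g2 p) / 2 := by
  rw [Fintype.sum_prod_type, Fin.sum_univ_two]
  unfold symAvg
  rw [← Finset.sum_div, Finset.sum_add_distrib]

lemma symAvg_sum_finset (g2 : Fin 2 × β → ℝ) (S : Finset β) :
    ∑ w ∈ S, symAvg g2 w = (∑ w ∈ S, g2 (0, w) + ∑ w ∈ S, g2 (1, w)) / 2 := by
  unfold symAvg
  rw [← Finset.sum_div, Finset.sum_add_distrib]

lemma symAvg_loc {g2 : Fin 2 × β → ℝ}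
    (hg2 : IsResolvingFn ((⊤ : SimpleGraph (Fin 2)).lexProd H) g2) :
    IsLocatingFn H (symAvg g2) := by
  refine ⟨symAvg_mem hg2.1, fun v1 v2 hne => ?_⟩
  rw [symAvg_sum_finset]
  have h0 := k2_constraint_loc H hg2 0 hne
  have h1 := k2_constraint_loc H hg2 1 hne
  linarith

lemma symAvg_col {g2 : Fin 2 × β → ℝ}
    (hg2 : IsResolvingFn ((⊤ : SimpleGraph (Fin 2)).lexProd H) g2) (v1 v2 : β) :
    1 ≤ ∑ w ∈ colFinset H v1, symAvg g2 w + ∑ w ∈ colFinset H v2, symAvg g2 w := by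
  rw [symAvg_sum_finset, symAvg_sum_finset]
  have h0 := k2_constraint_col H hg2 v1 v2
  have h1 := k2_constraint_col H hg2 v2 v1
  linarith

lemma symAvg_loc_compl {g3 : Fin 2 × β → ℝ}
    (hg3 : IsResolvingFn ((⊤ : SimpleGraph (Fin 2)).lexProd Hᶜ) g3) :
    IsLocatingFn H (symAvg g3) := by
  refine ⟨symAvg_mem hg3.1, fun v1 v2 hne => ?_⟩
  rw [symAvg_sum_finset]
  have h0 := k2_constraint_loc Hᶜ hg3 0 hne
  have h1 := k2_constraint_loc Hᶜ hg3 1 hne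
  rw [locatingFinset_compl H v1 v2] at h0 h1
  linarith

lemma symAvg_coladj {g3 : Fin 2 × β → ℝ}
    (hg3 : IsResolvingFn ((⊤ : SimpleGraph (Fin 2)).lexProd Hᶜ) g3) (v1 v2 : β) :
    1 ≤ ∑ w ∈ colAdjFinset H v1, symAvg g3 w + ∑ w ∈ colAdjFinset H v2, symAvg g3 w := by
  rw [symAvg_sum_finset, symAvg_sum_finset]
  have h0 := k2_constraint_col Hᶜ hg3 v1 v2
  have h1 := k2_constraint_col Hᶜ hg3 v2 v1
  rw [colFinset_compl H v1, colFinset_compl H v2] at h0 h1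
  linarith

include hG hca hcb in
lemma upper_bound {ε : ℝ} (hε : 0 < ε) :
    fracMetricDim (G.lexProd H) ≤
      (m1 G : ℝ) * fracLoc H +
        (m2 G : ℝ) / 2 * fracMetricDim ((⊤ : SimpleGraph (Fin 2)).lexProd H) +
        (m3 G : ℝ) / 2 * fracMetricDim ((⊤ : SimpleGraph (Fin 2)).lexProd Hᶜ) + ε := by
  set d1 := fracLoc H
  set d2 := fracMetricDim ((⊤ : SimpleGraph (Fin 2)).lexProd H)
  set d3 := fracMetricDim ((⊤ : SimpleGraph (Fin 2)).lexProd Hᶜ)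
  set a1 : ℝ := (m1 G : ℝ)
  set a2 : ℝ := (m2 G : ℝ)
  set a3 : ℝ := (m3 G : ℝ)
  have ha1 : 0 ≤ a1 := Nat.cast_nonneg _
  have ha2 : 0 ≤ a2 := Nat.cast_nonneg _
  have ha3 : 0 ≤ a3 := Nat.cast_nonneg _
  set c : ℝ := a1 + a2 + a3 + 1 with hc
  have hcpos : 0 < c := by positivity
  have hεc : 0 < ε / c := div_pos hε hcpos
  obtain ⟨gL, hgL, hgLs⟩ := exists_locating_lt H hεc
  obtain ⟨g2, hg2, hg2s⟩ := exists_resolving_lt ((⊤ : SimpleGraph (Fin 2)).lexProd H) hεc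
  obtain ⟨g3, hg3, hg3s⟩ := exists_resolving_lt ((⊤ : SimpleGraph (Fin 2)).lexProd Hᶜ) hεc
  have hmain := upper_construct G H hG hca hcb gL (symAvg g2) (symAvg g3) hgL
    (symAvg_mem hg2.1) (symAvg_loc H hg2) (symAvg_col H hg2)
    (symAvg_mem hg3.1) (symAvg_loc_compl H hg3) (symAvg_coladj H hg3)
  rw [symAvg_sum_eq, symAvg_sum_eq] at hmain
  have hb1 : ∑ v, gL v ≤ d1 + ε / c := le_of_lt hgLs
  have hb2 : ∑ p, g2 p ≤ d2 + ε / c := le_of_lt hg2s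
  have hb3 : ∑ p, g3 p ≤ d3 + ε / c := le_of_lt hg3s
  have t1 : a1 * ∑ v, gL v ≤ a1 * (d1 + ε / c) := mul_le_mul_of_nonneg_left hb1 ha1
  have t2 : a2 * ((∑ p, g2 p) / 2) ≤ a2 * ((d2 + ε / c) / 2) :=
    mul_le_mul_of_nonneg_left (by linarith) ha2
  have t3 : a3 * ((∑ p, g3 p) / 2) ≤ a3 * ((d3 + ε / c) / 2) :=
    mul_le_mul_of_nonneg_left (by linarith) ha3
  have hext : (a1 + a2 / 2 + a3 / 2) * (ε / c) ≤ ε := by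
    have h1 : a1 + a2 / 2 + a3 / 2 ≤ c := by rw [hc]; linarith
    calc (a1 + a2 / 2 + a3 / 2) * (ε / c) ≤ c * (ε / c) :=
          mul_le_mul_of_nonneg_right h1 (le_of_lt hεc)
      _ = ε := by field_simp
  have hfin : a1 * (d1 + ε / c) + a2 * ((d2 + ε / c) / 2) + a3 * ((d3 + ε / c) / 2) =
      (a1 * d1 + a2 / 2 * d2 + a3 / 2 * d3) + (a1 + a2 / 2 + a3 / 2) * (ε / c) := by
    ring
  calc fracMetricDim (G.lexProd H) ≤
      a1 * ∑ v, gL v + a2 * ((∑ p, g2 p) / 2) + a3 * ((∑ p, g3 p) / 2) := by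
        convert hmain using 2 <;> ring
    _ ≤ a1 * (d1 + ε / c) + a2 * ((d2 + ε / c) / 2) + a3 * ((d3 + ε / c) / 2) := by
        linarith
    _ = (a1 * d1 + a2 / 2 * d2 + a3 / 2 * d3) + (a1 + a2 / 2 + a3 / 2) * (ε / c) := hfin
    _ ≤ a1 * d1 + a2 / 2 * d2 + a3 / 2 * d3 + ε := by linarith

end Main

end Aux

/-- For a connected graph `G` and a graph `H`,
`dim_f(G[H]) = m₁(G)·l_f(H) + (m₂(G)/2)·dim_f(K₂[H]) + (m₃(G)/2)·dim_f(K₂[H̄])`. -/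
theorem stmt_16 {α β : Type*} [Fintype α] [Fintype β] [DecidableEq β]
    (G : SimpleGraph α) (H : SimpleGraph β) [DecidableRel H.Adj]
    (hG : G.Connected) (hca : 2 ≤ Fintype.card α) (hcb : 2 ≤ Fintype.card β) :
    fracMetricDim (G.lexProd H) =
      (m1 G : ℝ) * fracLoc H +
        (m2 G : ℝ) / 2 * fracMetricDim ((⊤ : SimpleGraph (Fin 2)).lexProd H) +
        (m3 G : ℝ) / 2 * fracMetricDim ((⊤ : SimpleGraph (Fin 2)).lexProd Hᶜ) := by
  refine le_antisymm ?_ ?_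
  · exact le_of_forall_pos_le_add (fun ε hε => upper_bound G H hG hca hcb hε)
  · refine le_csInf (RSet_nonempty _) ?_
    rintro w ⟨g, hg, rfl⟩
    exact lower_bound G H hG hca hg
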